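/- The functor Φ from oriented 1-Cob to 2-Cob (sending each signed point to a boundary circle, forgetting signs, and assigning genus 0 to every component) is faithful: if the images of two oriented 1-cobordisms from m to n under Φ are equivalent as 2-cobordisms, then the original oriented 1-cobordisms are equivalent in 1-Cob⁺. -/

import Mathlib

open scoped Classical

/-- The relation generating the pushout of a span `A ← k → B` of (finite) sets. -/
def PRel {k A B : Type} (f : k → A) (g : k → B) : A ⊕ B → A ⊕ B → Prop :=
  fun x y => ∃ z, x = Sum.inl (f z) ∧ y = Sum.inr (g z)

/-- The pushout of the span `A ← k → B`. -/
def Pushout {k A B : Type} (f : k → A) (g : k → B) : Type :=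
  Quot (PRel f g)

/-- Canonical map `ι_A : A → A ⊔_k B`. -/
def pInl {k A B : Type} (f : k → A) (g : k → B) (a : A) : Pushout f g :=
  Quot.mk _ (Sum.inl a)

/-- Canonical map `ι_B : B → A ⊔_k B`. -/
def pInr {k A B : Type} (f : k → A) (g : k → B) (b : B) : Pushout f g :=
  Quot.mk _ (Sum.inr b)

instance {k A B : Type} (f : k → A) (g : k → B) [Finite A] [Finite B] :
    Finite (Pushout f g) :=
  Quot.finite _

noncomputable instance {k A B : Type} (f : k → A) (g : k → B) [Fintype A] [Fintype B] :
    Fintype (Pushout f g) :=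
  Fintype.ofFinite _

/-- The genus formula of Definition 3.4:
`g(x) = 1 + Σ_{ι_A(a)=x}(g₁(a)−1) + Σ_{ι_B(b)=x}(g₂(b)−1) + #{y ∈ k : y ↦ x}`. -/
noncomputable def compGenus {k A B : Type} [Fintype k] [Fintype A] [Fintype B]
    (f : k → A) (g : k → B) (g1 : A → ℤ) (g2 : B → ℤ) (x : Pushout f g) : ℤ :=
  1 + (∑ a ∈ Finset.univ.filter (fun a => pInl f g a = x), (g1 a - 1))
    + (∑ b ∈ Finset.univ.filter (fun b => pInr f g b = x), (g2 b - 1))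
    + ((Finset.univ.filter (fun y : k => pInl f g (f y) = x)).card : ℤ)

/-- A combinatorial 2-cobordism from the finite set `m` to the finite set `n`. -/
structure Cob (m n : Type) : Type 1 where
  C : Type
  [fin : Fintype C]
  lm : m → C
  ln : n → C
  g : C → ℕ

attribute [instance] Cob.fin

/-- Composition of combinatorial 2-cobordisms via pushout of component sets
and the genus formula of Definition 3.4. -/
noncomputable def Cob.comp {m k n : Type} [Fintype k] (ψ : Cob k n) (φ : Cob m k) :
    Cob m n where
  C := Pushout φ.ln ψ.lm
  lm := fun x => pInl φ.ln ψ.lm (φ.lm x)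
  ln := fun y => pInr φ.ln ψ.lm (ψ.ln y)
  g := fun x =>
    (compGenus φ.ln ψ.lm (fun a => (φ.g a : ℤ)) (fun b => (ψ.g b : ℤ)) x).toNat

/-- Equivalence of combinatorial 2-cobordisms: a bijection of component sets
intertwining the structure maps and the genus functions. -/
def Cob.Equiv {m n : Type} (φ φ' : Cob m n) : Prop :=
  ∃ χ : φ.C ≃ φ'.C,
    (∀ x, χ (φ.lm x) = φ'.lm x) ∧ (∀ y, χ (φ.ln y) = φ'.ln y) ∧
    (∀ c, φ'.g (χ c) = φ.g c)

/-- A cofibration: `l_n` is injective and `l_n` lifts through `l_m`. -/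
def Cob.IsCofib {m n : Type} (φ : Cob m n) : Prop :=
  Function.Injective φ.ln ∧ ∃ u : n → m, ∀ y, φ.lm (u y) = φ.ln y

/-- A fibration: `l_m` is injective, `l_n` is surjective, and `g ∘ l_m = 0`. -/
def Cob.IsFib {m n : Type} (φ : Cob m n) : Prop :=
  Function.Injective φ.lm ∧ Function.Surjective φ.ln ∧ ∀ x, φ.g (φ.lm x) = 0

/-- The five local conditions of Definition 5.2.1 defining an oriented 1-cobordism
between signed finite sets (signs recorded by Boolean functions, `true` = `+`). -/
def IsOriented {m n C : Type} (sm : m → Bool) (sn : n → Bool)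
    (lm : m → C) (ln : n → C) : Prop :=
  ∀ c : C,
    (∃ a b : m, sm a = true ∧ sm b = false ∧ a ≠ b ∧
      (∀ x, lm x = c ↔ (x = a ∨ x = b)) ∧ (∀ y, ln y ≠ c)) ∨
    (∃ a b : n, sn a = true ∧ sn b = false ∧ a ≠ b ∧
      (∀ y, ln y = c ↔ (y = a ∨ y = b)) ∧ (∀ x, lm x ≠ c)) ∨
    (∃ a : m, ∃ b : n, sm a = sn b ∧
      (∀ x, lm x = c ↔ x = a) ∧ (∀ y, ln y = c ↔ y = b)) ∨
    ((∀ x, lm x ≠ c) ∧ (∀ y, ln y ≠ c))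

section FaithfulAux

variable {α β m n C C' : Type}

/-- `x` has a companion in its fiber of `f`. -/
def Pm (f : m → C) (x : m) : Prop := ∃ x', x' ≠ x ∧ f x' = f x

lemma Pm_fiber {f : m → C} {a b : m} (h : f a = f b) (ha : Pm f a) : Pm f b := by
  obtain ⟨x', hx, he⟩ := ha
  by_cases hb : x' = b
  · subst hb
    exact ⟨a, fun hh => hx hh.symm, h⟩
  · exact ⟨x', hb, he.trans h⟩

lemma notPm_fiber {f : m → C} {x x' : m} (hx : ¬ Pm f x) (he : f x' = f x) : x' = x := by
  by_contra hne; exact hx ⟨x', hne, he⟩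

lemma orient_m {sm : m → Bool} {sn : n → Bool} {lm : m → C} {ln : n → C}
    (h : IsOriented sm sn lm ln) (x : m) :
    (Pm lm x ∧ (∀ z z', lm z = lm x → lm z' = lm x → sm z = sm z' → z = z') ∧
      (∀ s, ∃ z, lm z = lm x ∧ sm z = s)) ∨
    (¬ Pm lm x ∧ ∃ y, ln y = lm x ∧ sn y = sm x ∧ (∀ y', ln y' = lm x → y' = y)) := by
  rcases h (lm x) with ⟨a, b, ha, hb, hab, hf, _⟩ | ⟨a, b, _, _, _, _, hm⟩ |
      ⟨a, b, hs, hfm, hfn⟩ | ⟨hm, _⟩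
  · left
    refine ⟨?_, ?_, ?_⟩
    · rcases (hf x).mp rfl with rfl | rfl
      · exact ⟨b, fun hh => hab hh.symm, (hf b).mpr (Or.inr rfl)⟩
      · exact ⟨a, hab, (hf a).mpr (Or.inl rfl)⟩
    · intro z z' hz hz' hss
      rcases (hf z).mp hz with rfl | rfl <;> rcases (hf z').mp hz' with rfl | rfl
      · rfl
      · rw [ha, hb] at hss; exact absurd hss (by simp)
      · rw [ha, hb] at hss; exact absurd hss (by simp)
      · rfl
    · intro s
      cases s
      · exact ⟨b, (hf b).mpr (Or.inr rfl), hb⟩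
      · exact ⟨a, (hf a).mpr (Or.inl rfl), ha⟩
  · exact absurd rfl (hm x)
  · right
    have hx : x = a := (hfm x).mp rfl
    subst hx
    refine ⟨?_, b, (hfn b).mpr rfl, hs.symm, fun y' hy' => (hfn y').mp hy'⟩
    rintro ⟨x', hne, he⟩
    exact hne ((hfm x').mp he)
  · exact absurd rfl (hm x)

lemma orient_n {sm : m → Bool} {sn : n → Bool} {lm : m → C} {ln : n → C}
    (h : IsOriented sm sn lm ln) (y : n) :
    (Pm ln y ∧ (∀ z z', ln z = ln y → ln z' = ln y → sn z = sn z' → z = z') ∧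
      (∀ s, ∃ z, ln z = ln y ∧ sn z = s)) ∨
    (¬ Pm ln y ∧ ∃ x, lm x = ln y ∧ sm x = sn y ∧ (∀ x', lm x' = ln y → x' = x)) := by
  rcases h (ln y) with ⟨a, b, _, _, _, _, hn⟩ | ⟨a, b, ha, hb, hab, hf, _⟩ |
      ⟨a, b, hs, hfm, hfn⟩ | ⟨_, hn⟩
  · exact absurd rfl (hn y)
  · left
    refine ⟨?_, ?_, ?_⟩
    · rcases (hf y).mp rfl with rfl | rfl
      · exact ⟨b, fun hh => hab hh.symm, (hf b).mpr (Or.inr rfl)⟩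
      · exact ⟨a, hab, (hf a).mpr (Or.inl rfl)⟩
    · intro z z' hz hz' hss
      rcases (hf z).mp hz with rfl | rfl <;> rcases (hf z').mp hz' with rfl | rfl
      · rfl
      · rw [ha, hb] at hss; exact absurd hss (by simp)
      · rw [ha, hb] at hss; exact absurd hss (by simp)
      · rfl
    · intro s
      cases s
      · exact ⟨b, (hf b).mpr (Or.inr rfl), hb⟩
      · exact ⟨a, (hf a).mpr (Or.inl rfl), ha⟩
  · right
    have hy : y = b := (hfn y).mp rfl
    subst hy
    refine ⟨?_, a, (hfm a).mpr rfl, hs, fun x' hx' => (hfm x').mp hx'⟩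
    rintro ⟨y', hne, he⟩
    exact hne ((hfn y').mp he)
  · exact absurd rfl (hn y)

lemma Pm_transfer {f : m → C} {f' : m → C'} (φ : m ≃ m) (χ : C ≃ C')
    (hint : ∀ x, χ (f x) = f' (φ x)) (x : m) : Pm f x ↔ Pm f' (φ x) := by
  constructor
  · rintro ⟨x', hne, he⟩
    refine ⟨φ x', fun hh => hne (φ.injective hh), ?_⟩
    rw [← hint, ← hint, he]
  · rintro ⟨z, hne, he⟩
    refine ⟨φ.symm z, fun hh => hne (by rw [← hh, Equiv.apply_symm_apply]), ?_⟩
    apply χ.injective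
    rw [hint, hint, Equiv.apply_symm_apply, he]

/-- Glue an equivalence on a subtype and on its complement to an equivalence. -/
noncomputable def glueEquiv (p : α → Prop) (q : β → Prop)
    (e : {a // p a} ≃ {b // q b}) (f : {a // ¬ p a} ≃ {b // ¬ q b}) : α ≃ β :=
  (Equiv.sumCompl p).symm.trans ((e.sumCongr f).trans (Equiv.sumCompl q))

lemma glueEquiv_pos {p : α → Prop} {q : β → Prop}
    (e : {a // p a} ≃ {b // q b}) (f : {a // ¬ p a} ≃ {b // ¬ q b})
    (a : α) (h : p a) : glueEquiv p q e f a = (e ⟨a, h⟩).1 := by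
  simp [glueEquiv, Equiv.sumCompl_symm_apply_of_pos h]

lemma glueEquiv_neg {p : α → Prop} {q : β → Prop}
    (e : {a // p a} ≃ {b // q b}) (f : {a // ¬ p a} ≃ {b // ¬ q b})
    (a : α) (h : ¬ p a) : glueEquiv p q e f a = (f ⟨a, h⟩).1 := by
  simp [glueEquiv, Equiv.sumCompl_symm_apply_of_neg h]

lemma card_split [Finite α] (P T : α → Prop) :
    Nat.card {x // T x} = Nat.card {x // P x ∧ T x} + Nat.card {x // ¬ P x ∧ T x} := by
  rw [← Nat.card_sum]
  apply Nat.card_congr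
  exact ((Equiv.sumCompl (fun x : {x // T x} => P x.1)).symm.trans
    (Equiv.sumCongr
      ((Equiv.subtypeSubtypeEquivSubtypeInter T P).trans
        (Equiv.subtypeEquivRight fun x => and_comm))
      ((Equiv.subtypeSubtypeEquivSubtypeInter T (fun x => ¬ P x)).trans
        (Equiv.subtypeEquivRight fun x => and_comm))))

lemma exists_signEquiv [Finite α] [Finite β] (sa : α → Bool) (sb : β → Bool)
    (h : ∀ s, Nat.card {x // sa x = s} = Nat.card {x // sb x = s}) :
    ∃ e : α ≃ β, ∀ x, sb (e x) = sa x := by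
  have := Fintype.ofFinite α
  have := Fintype.ofFinite β
  have ht : Fintype.card {x // sa x = true} = Fintype.card {x // sb x = true} := by
    rw [← Nat.card_eq_fintype_card, ← Nat.card_eq_fintype_card]; exact h true
  have hf : Fintype.card {x // sa x = false} = Fintype.card {x // sb x = false} := by
    rw [← Nat.card_eq_fintype_card, ← Nat.card_eq_fintype_card]; exact h false
  set et : {x // sa x = true} ≃ {x // sb x = true} := Fintype.equivOfCardEq ht
  set ef : {x // sa x = false} ≃ {x // sb x = false} := Fintype.equivOfCardEq hf
  set ef' : {x // ¬ (sa x = true)} ≃ {x // ¬ (sb x = true)} :=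
    (Equiv.subtypeEquivRight (fun x => by simp)).trans
      (ef.trans (Equiv.subtypeEquivRight (fun x => by simp)))
  refine ⟨glueEquiv _ _ et ef', fun x => ?_⟩
  by_cases hx : sa x = true
  · rw [glueEquiv_pos _ _ x hx, (et ⟨x, hx⟩).2, hx]
  · rw [glueEquiv_neg _ _ x hx]
    have h1 := (ef' ⟨x, hx⟩).2
    simp only [Bool.not_eq_true] at h1 hx
    rw [h1, hx]

lemma compl_signEquiv [Finite α] (s : α → Bool) (P P' : α → Prop)
    (e : {x // P x} ≃ {x // P' x}) (he : ∀ x, s (e x).1 = s x.1) :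
    ∃ f : {x // ¬ P x} ≃ {x // ¬ P' x}, ∀ x, s (f x).1 = s x.1 := by
  have hcard : ∀ b, Nat.card {x // P x ∧ s x = b} = Nat.card {x // P' x ∧ s x = b} := by
    intro b
    apply Nat.card_congr
    exact ((Equiv.subtypeSubtypeEquivSubtypeInter P (fun x => s x = b)).symm.trans
      ((e.subtypeEquiv (fun a => by rw [he a])).trans
        (Equiv.subtypeSubtypeEquivSubtypeInter P' (fun x => s x = b))))
  have hkey : ∀ b, Nat.card {x : {x // ¬ P x} // s x.1 = b}
      = Nat.card {x : {x // ¬ P' x} // s x.1 = b} := by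
    intro b
    have h1 : Nat.card {x : {x // ¬ P x} // s x.1 = b}
        = Nat.card {x // ¬ P x ∧ s x = b} :=
      Nat.card_congr (Equiv.subtypeSubtypeEquivSubtypeInter (fun x => ¬ P x) (fun x => s x = b))
    have h2 : Nat.card {x : {x // ¬ P' x} // s x.1 = b}
        = Nat.card {x // ¬ P' x ∧ s x = b} :=
      Nat.card_congr (Equiv.subtypeSubtypeEquivSubtypeInter (fun x => ¬ P' x) (fun x => s x = b))
    have h3 := card_split P (fun x => s x = b)
    have h4 := card_split P' (fun x => s x = b)
    have h5 := hcard b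
    rw [h1, h2]
    omega
  obtain ⟨f, hf⟩ := exists_signEquiv (fun x : {x // ¬ P x} => s x.1)
    (fun x : {x // ¬ P' x} => s x.1) hkey
  exact ⟨f, hf⟩

lemma pairEquiv (s : m → Bool) (f : m → C) (f' : m → C')
    (φ : m ≃ m) (χ : C ≃ C') (hint : ∀ x, χ (f x) = f' (φ x))
    (hA : ∀ x, Pm f x → (∀ z z', f z = f x → f z' = f x → s z = s z' → z = z') ∧
      (∀ b, ∃ z, f z = f x ∧ s z = b))
    (hA' : ∀ x, Pm f' x → (∀ z z', f' z = f' x → f' z' = f' x → s z = s z' → z = z') ∧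
      (∀ b, ∃ z, f' z = f' x ∧ s z = b)) :
    ∃ e : {x // Pm f x} ≃ {x // Pm f' x},
      (∀ x, s (e x).1 = s x.1) ∧ (∀ x, f' (e x).1 = χ (f x.1)) := by
  have hT : ∀ x, Pm f x ↔ Pm f' (φ x) := Pm_transfer φ χ hint
  have hch : ∀ x : {x // Pm f x}, ∃ z, f' z = f' (φ x.1) ∧ s z = s x.1 :=
    fun x => (hA' (φ x.1) ((hT x.1).mp x.2)).2 (s x.1)
  choose g hg1 hg2 using hch
  have hgP : ∀ x, Pm f' (g x) := fun x => Pm_fiber (hg1 x).symm ((hT x.1).mp x.2)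
  have hinj : Function.Injective (fun x => (⟨g x, hgP x⟩ : {x // Pm f' x})) := by
    intro x y hxy
    have hgg : g x = g y := congrArg Subtype.val hxy
    have hff : f x.1 = f y.1 := by
      apply χ.injective
      rw [hint, hint]
      rw [← hg1 x, ← hg1 y, hgg]
    have hss : s x.1 = s y.1 := by rw [← hg2 x, ← hg2 y, hgg]
    exact Subtype.ext ((hA x.1 x.2).1 x.1 y.1 rfl hff.symm hss)
  have hsurj : Function.Surjective (fun x => (⟨g x, hgP x⟩ : {x // Pm f' x})) := by
    rintro ⟨z, hz⟩
    have hz0 : Pm f (φ.symm z) := by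
      rw [hT (φ.symm z), Equiv.apply_symm_apply]; exact hz
    obtain ⟨x, hx1, hx2⟩ := (hA (φ.symm z) hz0).2 (s z)
    have hxP : Pm f x := Pm_fiber hx1.symm hz0
    refine ⟨⟨x, hxP⟩, Subtype.ext ?_⟩
    have e1 : f' (g ⟨x, hxP⟩) = f' z := by
      rw [hg1, ← hint x, hx1, hint (φ.symm z), Equiv.apply_symm_apply]
    have e2 : s (g ⟨x, hxP⟩) = s z := by rw [hg2]; exact hx2
    exact (hA' z hz).1 _ z e1 rfl e2
  refine ⟨Equiv.ofBijective _ ⟨hinj, hsurj⟩, fun x => hg2 x, fun x => ?_⟩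
  show f' (g x) = χ (f x.1)
  rw [hg1, ← hint]

lemma partnerEquiv {sm : m → Bool} {sn : n → Bool} {lm : m → C} {ln : n → C}
    (h : IsOriented sm sn lm ln) :
    ∃ p : {x // ¬ Pm lm x} ≃ {y // ¬ Pm ln y},
      (∀ x, ln (p x).1 = lm x.1) ∧ (∀ x, sn (p x).1 = sm x.1) := by
  have hm : ∀ (x : m), ¬ Pm lm x →
      ∃ y, ln y = lm x ∧ sn y = sm x ∧ (∀ y', ln y' = lm x → y' = y) :=
    fun x hx => ((orient_m h x).resolve_left (fun hl => hx hl.1)).2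
  choose g hg1 hg2 hg3 using hm
  have hn : ∀ (y : n), ¬ Pm ln y →
      ∃ x, lm x = ln y ∧ sm x = sn y ∧ (∀ x', lm x' = ln y → x' = x) :=
    fun y hy => ((orient_n h y).resolve_left (fun hl => hy hl.1)).2
  choose g' hg'1 hg'2 hg'3 using hn
  have hgQ : ∀ x hx, ¬ Pm ln (g x hx) := by
    intro x hx
    rintro ⟨y', hne, he⟩
    exact hne (hg3 x hx y' (he.trans (hg1 x hx)))
  have hinj : Function.Injective
      (fun x : {x // ¬ Pm lm x} => (⟨g x.1 x.2, hgQ x.1 x.2⟩ : {y // ¬ Pm ln y})) := by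
    intro x y hxy
    have hgg : g x.1 x.2 = g y.1 y.2 := congrArg Subtype.val hxy
    have hff : lm x.1 = lm y.1 := by rw [← hg1 x.1 x.2, hgg, hg1 y.1 y.2]
    exact Subtype.ext (notPm_fiber y.2 hff)
  have hsurj : Function.Surjective
      (fun x : {x // ¬ Pm lm x} => (⟨g x.1 x.2, hgQ x.1 x.2⟩ : {y // ¬ Pm ln y})) := by
    rintro ⟨y, hy⟩
    have hx : ¬ Pm lm (g' y hy) := by
      rintro ⟨x', hne, he⟩
      exact hne (hg'3 y hy x' (he.trans (hg'1 y hy)))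
    refine ⟨⟨g' y hy, hx⟩, Subtype.ext ?_⟩
    have : ln (g (g' y hy) hx) = ln y := by
      rw [hg1 (g' y hy) hx, hg'1 y hy]
    exact notPm_fiber hy this
  exact ⟨Equiv.ofBijective _ ⟨hinj, hsurj⟩,
    fun x => hg1 x.1 x.2, fun x => hg2 x.1 x.2⟩

end FaithfulAux

/-- Lemma 5.4.1: the functor `Φ : 1-Cob⁺ → 2-Cob` is faithful: if the
images of two oriented 1-cobordisms (genus-0 2-cobordisms obtained by forgetting the
signs) are equivalent as 2-cobordisms, then the oriented 1-cobordisms are equivalent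
via sign-preserving bijections. -/
theorem stmt_15 {m n C C' : Type} [Finite m] [Finite n] [Finite C] [Finite C']
    (sm : m → Bool) (sn : n → Bool)
    (lm : m → C) (ln : n → C) (lm' : m → C') (ln' : n → C')
    (h1 : IsOriented sm sn lm ln) (h2 : IsOriented sm sn lm' ln')
    (h : ∃ (φ : m ≃ m) (ψ : n ≃ n) (χ : C ≃ C'),
          (∀ x, χ (lm x) = lm' (φ x)) ∧ (∀ y, χ (ln y) = ln' (ψ y))) :
    ∃ (φ : m ≃ m) (ψ : n ≃ n) (χ : C ≃ C'),
      (∀ x, sm (φ x) = sm x) ∧ (∀ y, sn (ψ y) = sn y) ∧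
      (∀ x, χ (lm x) = lm' (φ x)) ∧ (∀ y, χ (ln y) = ln' (ψ y)) := by
  obtain ⟨φ, ψ, χ, hχm, hχn⟩ := h
  -- paired part of `m`
  obtain ⟨e1, he1s, he1c⟩ := pairEquiv sm lm lm' φ χ hχm
    (fun x hx => ((orient_m h1 x).resolve_right (fun hr => hr.1 hx)).2)
    (fun x hx => ((orient_m h2 x).resolve_right (fun hr => hr.1 hx)).2)
  -- paired part of `n`
  obtain ⟨e1n, he1ns, he1nc⟩ := pairEquiv sn ln ln' ψ χ hχn
    (fun y hy => ((orient_n h1 y).resolve_right (fun hr => hr.1 hy)).2)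
    (fun y hy => ((orient_n h2 y).resolve_right (fun hr => hr.1 hy)).2)
  -- unpaired (matched) part of `m`
  obtain ⟨e2, he2s⟩ := compl_signEquiv sm (Pm lm) (Pm lm') e1 he1s
  -- partner equivalences between unpaired parts of `m` and `n`
  obtain ⟨p, hp1, hp2⟩ := partnerEquiv h1
  obtain ⟨p', hp'1, hp'2⟩ := partnerEquiv h2
  set e2n : {y // ¬ Pm ln y} ≃ {y // ¬ Pm ln' y} := p.symm.trans (e2.trans p') with he2n
  have he2ns : ∀ y, sn (e2n y).1 = sn y.1 := by
    intro y
    have h1' : sn (e2n y).1 = sm (e2 (p.symm y)).1 := hp'2 _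
    have h2' : sm (e2 (p.symm y)).1 = sm (p.symm y).1 := he2s _
    have h3' : sn (p (p.symm y)).1 = sm (p.symm y).1 := hp2 _
    rw [h1', h2', ← h3', Equiv.apply_symm_apply]
  -- the new bijections on `m` and `n`
  set φn : m ≃ m := glueEquiv (Pm lm) (Pm lm') e1 e2 with hφn
  set ψn : n ≃ n := glueEquiv (Pm ln) (Pm ln') e1n e2n with hψn
  -- components hit by an unpaired `m`-point
  set R : C → Prop := fun c => ∃ x, lm x = c ∧ ¬ Pm lm x with hR
  set R' : C' → Prop := fun c => ∃ x, lm' x = c ∧ ¬ Pm lm' x with hR'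
  have hT : ∀ x, Pm lm x ↔ Pm lm' (φ x) := Pm_transfer φ χ hχm
  have hRR' : ∀ c, R c ↔ R' (χ c) := by
    intro c
    constructor
    · rintro ⟨x, rfl, hx⟩
      exact ⟨φ x, (hχm x).symm, fun hp => hx ((hT x).mpr hp)⟩
    · rintro ⟨z, hz1, hz2⟩
      refine ⟨φ.symm z, ?_, ?_⟩
      · apply χ.injective
        rw [hχm, Equiv.apply_symm_apply, hz1]
      · intro hp
        have := (hT (φ.symm z)).mp hp
        rw [Equiv.apply_symm_apply] at this
        exact hz2 this
  -- the equivalence between unpaired `m`-points and their components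
  have hxToC_bij : Function.Bijective
      (fun x : {x // ¬ Pm lm x} => (⟨lm x.1, x.1, rfl, x.2⟩ : {c // R c})) := by
    constructor
    · intro x y hxy
      have : lm x.1 = lm y.1 := congrArg Subtype.val hxy
      exact Subtype.ext (notPm_fiber y.2 this)
    · rintro ⟨c, x, hx1, hx2⟩
      exact ⟨⟨x, hx2⟩, Subtype.ext hx1⟩
  set xToC : {x // ¬ Pm lm x} ≃ {c // R c} := Equiv.ofBijective _ hxToC_bij with hxToC
  have hxToC_bij' : Function.Bijective
      (fun x : {x // ¬ Pm lm' x} => (⟨lm' x.1, x.1, rfl, x.2⟩ : {c // R' c})) := by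
    constructor
    · intro x y hxy
      have : lm' x.1 = lm' y.1 := congrArg Subtype.val hxy
      exact Subtype.ext (notPm_fiber y.2 this)
    · rintro ⟨c, x, hx1, hx2⟩
      exact ⟨⟨x, hx2⟩, Subtype.ext hx1⟩
  set x'ToC' : {x // ¬ Pm lm' x} ≃ {c // R' c} := Equiv.ofBijective _ hxToC_bij' with hx'ToC'
  set χRest : {c // ¬ R c} ≃ {c // ¬ R' c} :=
    χ.subtypeEquiv (fun c => not_congr (hRR' c)) with hχRest
  set χn : C ≃ C' := glueEquiv R R' (xToC.symm.trans (e2.trans x'ToC')) χRest with hχn'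
  refine ⟨φn, ψn, χn, ?_, ?_, ?_, ?_⟩
  · intro x
    by_cases hx : Pm lm x
    · rw [hφn, glueEquiv_pos _ _ x hx]; exact he1s _
    · rw [hφn, glueEquiv_neg _ _ x hx]; exact he2s _
  · intro y
    by_cases hy : Pm ln y
    · rw [hψn, glueEquiv_pos _ _ y hy]; exact he1ns _
    · rw [hψn, glueEquiv_neg _ _ y hy]; exact he2ns _
  · intro x
    by_cases hx : Pm lm x
    · have hnR : ¬ R (lm x) := by
        rintro ⟨x0, he0, hx0⟩
        exact hx0 (Pm_fiber he0.symm hx)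
      rw [hχn', glueEquiv_neg _ _ (lm x) hnR, hφn, glueEquiv_pos _ _ x hx, he1c]
      rfl
    · have hRc : R (lm x) := ⟨x, rfl, hx⟩
      rw [hχn', glueEquiv_pos _ _ (lm x) hRc, hφn, glueEquiv_neg _ _ x hx]
      have hsymm : xToC.symm ⟨lm x, hRc⟩ = ⟨x, hx⟩ := by
        rw [Equiv.symm_apply_eq]
        exact Subtype.ext rfl
      rw [Equiv.trans_apply, Equiv.trans_apply, hsymm]
      rfl
  · intro y
    by_cases hy : Pm ln y
    · have hnR : ¬ R (ln y) := by
        rintro ⟨x0, he0, hx0⟩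
        obtain ⟨y0, -, -, hu⟩ :=
          ((orient_m h1 x0).resolve_left (fun hl => hx0 hl.1)).2
        obtain ⟨y', hne, he⟩ := hy
        exact hne ((hu y' (he.trans he0.symm)).trans (hu y he0.symm).symm)
      rw [hχn', glueEquiv_neg _ _ (ln y) hnR, hψn, glueEquiv_pos _ _ y hy, he1nc]
      rfl
    · have hlmy : lm (p.symm ⟨y, hy⟩).1 = ln y := by
        have := hp1 (p.symm ⟨y, hy⟩)
        rw [Equiv.apply_symm_apply] at this
        exact this.symm
      have hRc : R (ln y) := ⟨(p.symm ⟨y, hy⟩).1, hlmy, (p.symm ⟨y, hy⟩).2⟩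
      rw [hχn', glueEquiv_pos _ _ (ln y) hRc, hψn, glueEquiv_neg _ _ y hy]
      have hsymm : xToC.symm ⟨ln y, hRc⟩ = p.symm ⟨y, hy⟩ := by
        rw [Equiv.symm_apply_eq]
        exact Subtype.ext hlmy.symm
      rw [Equiv.trans_apply, Equiv.trans_apply, hsymm]
      have hrhs : (e2n ⟨y, hy⟩).1 = (p' (e2 (p.symm ⟨y, hy⟩))).1 := rfl
      rw [hrhs, hp'1]
      rfl
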